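/- Let N be a positive integer, κ = diag(κ₁,…,κ_N) real diagonal with strictly positive entries, and let 𝒳₀ be a real N-component column vector. Define 𝒳(r) = e^{−κr}𝒳₀ and σ(r) = κ^{−1/2}(e^{κr} + e^{−κr}𝒳₀𝒳₀ᵀ). Then for every r ≥ 0 the matrix σ(r) is invertible, (I + 𝒳𝒳ᵀ)⁻¹ = I − (1 + 𝒳ᵀ𝒳)⁻¹𝒳𝒳ᵀ, and the superpotential satisfies U(r) = σ'(r)σ(r)⁻¹ = κ − 2(1 + 𝒳(r)ᵀ𝒳(r))⁻¹ κ^{1/2} 𝒳(r)𝒳(r)ᵀ κ^{1/2}. -/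

import Mathlib

open Matrix

section Aux

variable {n : Type*} [Fintype n] [DecidableEq n]

lemma aux_dot_nonneg (X : n → ℝ) : 0 ≤ X ⬝ᵥ X :=
  Finset.sum_nonneg fun i _ => mul_self_nonneg _

lemma aux_PP (X : n → ℝ) :
    vecMulVec X X * vecMulVec X X = (X ⬝ᵥ X) • vecMulVec X X := by
  ext i j
  simp only [Matrix.mul_apply, vecMulVec_apply, Matrix.smul_apply, smul_eq_mul, dotProduct]
  rw [Finset.sum_mul]
  exact Finset.sum_congr rfl fun k _ => by ring

lemma aux_inv (X : n → ℝ) :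
    (1 + vecMulVec X X) * (1 - (1 + X ⬝ᵥ X)⁻¹ • vecMulVec X X) = 1 := by
  have ht : (0:ℝ) < 1 + X ⬝ᵥ X := by have := aux_dot_nonneg X; linarith
  set t := X ⬝ᵥ X with htdef
  set P := vecMulVec X X with hPdef
  rw [mul_sub, mul_one, add_mul, one_mul, mul_smul_comm, aux_PP, ← htdef, ← hPdef,
    smul_smul]
  rw [← add_smul]
  have h1 : (1 + t)⁻¹ + (1 + t)⁻¹ * t = 1 := by field_simp
  rw [h1, one_smul]
  abel

lemma aux_prod2 (X : n → ℝ) :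
    (1 - vecMulVec X X) * (1 - (1 + X ⬝ᵥ X)⁻¹ • vecMulVec X X)
      = 1 - (2 / (1 + X ⬝ᵥ X)) • vecMulVec X X := by
  have ht : (0:ℝ) < 1 + X ⬝ᵥ X := by have := aux_dot_nonneg X; linarith
  set t := X ⬝ᵥ X with htdef
  set P := vecMulVec X X with hPdef
  simp only [sub_mul, mul_sub, one_mul, mul_one, mul_smul_comm]
  rw [aux_PP, ← htdef, ← hPdef, smul_sub, smul_smul]
  have h1 : 2 / (1 + t) = 1 + ((1 + t)⁻¹ - (1 + t)⁻¹ * t) := by field_simp; ring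
  rw [h1, add_smul, sub_smul, one_smul]
  abel

lemma aux_diag_vmv (d a b : n → ℝ) :
    diagonal d * vecMulVec a b = vecMulVec (fun i => d i * a i) b := by
  ext i j
  rw [Matrix.diagonal_mul, vecMulVec_apply, vecMulVec_apply, mul_assoc]

lemma aux_vmv_diag (d a b : n → ℝ) :
    vecMulVec a b * diagonal d = vecMulVec a (fun j => b j * d j) := by
  ext i j
  rw [Matrix.mul_diagonal, vecMulVec_apply, vecMulVec_apply, mul_assoc]

end Aux

/-- Paper's Corollary 3 (equation (61)): for `σ(r) = κ^{-1/2}(e^{κr} + e^{-κr}𝒳₀𝒳₀ᵀ)`,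
the matrix `σ(r)` is invertible for all `r ≥ 0`, the rank-one inverse identity
`(I + 𝒳𝒳ᵀ)⁻¹ = I - (1 + 𝒳ᵀ𝒳)⁻¹𝒳𝒳ᵀ` holds, and the superpotential is
`U(r) = κ - 2(1 + 𝒳ᵀ𝒳)⁻¹κ^{1/2}𝒳𝒳ᵀκ^{1/2}` with `𝒳(r) = e^{-κr}𝒳₀`. -/
theorem cor3_rank_one_superpotential
    (N : ℕ) (hN : 0 < N)
    (κ : Fin N → ℝ) (hκ : ∀ i, 0 < κ i)
    (X₀ : Fin N → ℝ) :
    let Xv : ℝ → (Fin N → ℝ) := fun r i => Real.exp (-(κ i) * r) * X₀ i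
    let σ : ℝ → Matrix (Fin N) (Fin N) ℝ := fun r =>
      diagonal (fun i => (Real.sqrt (κ i))⁻¹) *
        (diagonal (fun i => Real.exp (κ i * r)) +
          diagonal (fun i => Real.exp (-(κ i) * r)) * vecMulVec X₀ X₀)
    let σd : ℝ → Matrix (Fin N) (Fin N) ℝ := fun r =>
      Matrix.of fun i j => deriv (fun s => σ s i j) r
    ∀ r : ℝ, 0 ≤ r →
      IsUnit (σ r) ∧
      ((1 : Matrix (Fin N) (Fin N) ℝ) + vecMulVec (Xv r) (Xv r))⁻¹
        = 1 - (1 + Xv r ⬝ᵥ Xv r)⁻¹ • vecMulVec (Xv r) (Xv r) ∧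
      σd r * (σ r)⁻¹ =
        diagonal κ - (2 / (1 + Xv r ⬝ᵥ Xv r)) •
          (diagonal (fun i => Real.sqrt (κ i)) * vecMulVec (Xv r) (Xv r) *
            diagonal (fun i => Real.sqrt (κ i))) := by
  intro Xv σ σd r _hr
  have hsqrt : ∀ i, Real.sqrt (κ i) ≠ 0 := fun i =>
    ne_of_gt (Real.sqrt_pos.mpr (hκ i))
  have hexp : ∀ a : ℝ, Real.exp (-a * r) * Real.exp (a * r) = 1 := fun a => by
    rw [← Real.exp_add, neg_mul, neg_add_cancel, Real.exp_zero]
  have h1 : ∀ a : ℝ, HasDerivAt (fun s : ℝ => Real.exp (a * s)) (a * Real.exp (a * r)) r := by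
    intro a
    have h := (Real.hasDerivAt_exp (a * r)).comp r ((hasDerivAt_id r).const_mul a)
    simpa [Function.comp_def, mul_comm] using h
  set X : Fin N → ℝ := Xv r with hXdef
  have hXi : ∀ i, X i = Real.exp (-(κ i) * r) * X₀ i := fun i => rfl
  set D := (diagonal (fun i => (Real.sqrt (κ i))⁻¹) : Matrix (Fin N) (Fin N) ℝ) with hD
  set S := (diagonal (fun i => Real.sqrt (κ i)) : Matrix (Fin N) (Fin N) ℝ) with hS
  set E := (diagonal (fun i => Real.exp (κ i * r)) : Matrix (Fin N) (Fin N) ℝ) with hE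
  set Em := (diagonal (fun i => Real.exp (-(κ i) * r)) : Matrix (Fin N) (Fin N) ℝ) with hEm
  set P := vecMulVec X X with hP
  set t := X ⬝ᵥ X with ht
  have ht0 : 0 ≤ t := aux_dot_nonneg X
  have ht1 : (0:ℝ) < 1 + t := by linarith
  -- entrywise description of σ s
  have hentry_eq : ∀ (s : ℝ) i, σ s i i =
      (Real.sqrt (κ i))⁻¹ * (Real.exp (κ i * s) + Real.exp (-(κ i) * s) * (X₀ i * X₀ i)) := by
    intro s i
    show (diagonal (fun i => (Real.sqrt (κ i))⁻¹) *
        (diagonal (fun i => Real.exp (κ i * s)) +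
          diagonal (fun i => Real.exp (-(κ i) * s)) * vecMulVec X₀ X₀)) i i = _
    rw [Matrix.diagonal_mul, Matrix.add_apply, Matrix.diagonal_mul, Matrix.diagonal_apply_eq,
      vecMulVec_apply]
  have hentry_ne : ∀ (s : ℝ) i j, i ≠ j → σ s i j =
      (Real.sqrt (κ i))⁻¹ * (Real.exp (-(κ i) * s) * (X₀ i * X₀ j)) := by
    intro s i j hij
    show (diagonal (fun i => (Real.sqrt (κ i))⁻¹) *
        (diagonal (fun i => Real.exp (κ i * s)) +
          diagonal (fun i => Real.exp (-(κ i) * s)) * vecMulVec X₀ X₀)) i j = _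
    rw [Matrix.diagonal_mul, Matrix.add_apply, Matrix.diagonal_mul,
      Matrix.diagonal_apply_ne _ hij, vecMulVec_apply, zero_add]
  -- factorizations
  have hPE : P * E = vecMulVec X X₀ := by
    rw [hP, hE, aux_vmv_diag]
    refine congrArg (vecMulVec X) (funext fun j => ?_)
    rw [hXi j, mul_right_comm, hexp, one_mul]
  have hσfac : σ r = D * ((1 + P) * E) := by
    have hσr : σ r = D * (E + Em * vecMulVec X₀ X₀) := rfl
    rw [hσr, add_mul, one_mul, hPE]
    congr 1
    congr 1
    rw [hEm, aux_diag_vmv]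
  have hσdfac : σd r = (D * diagonal κ) * ((1 - P) * E) := by
    ext i j
    show deriv (fun s => σ s i j) r = ((D * diagonal κ) * ((1 - P) * E)) i j
    rw [sub_mul, one_mul, hPE, hD, Matrix.diagonal_mul_diagonal, Matrix.diagonal_mul,
      Matrix.sub_apply, vecMulVec_apply]
    by_cases h : i = j
    · subst h
      rw [hE, Matrix.diagonal_apply_eq]
      have hfun : (fun s => σ s i i) = fun s =>
          (Real.sqrt (κ i))⁻¹ * (Real.exp (κ i * s) + Real.exp (-(κ i) * s) * (X₀ i * X₀ i)) :=
        funext fun s => hentry_eq s i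
      rw [hfun,
        HasDerivAt.deriv (f := fun s => (Real.sqrt (κ i))⁻¹ *
            (Real.exp (κ i * s) + Real.exp (-(κ i) * s) * (X₀ i * X₀ i)))
          (((h1 (κ i)).add ((h1 (-(κ i))).mul_const (X₀ i * X₀ i))).const_mul
          ((Real.sqrt (κ i))⁻¹)), hXi i]
      ring
    · rw [hE, Matrix.diagonal_apply_ne _ h]
      have hfun : (fun s => σ s i j) = fun s =>
          (Real.sqrt (κ i))⁻¹ * (Real.exp (-(κ i) * s) * (X₀ i * X₀ j)) :=
        funext fun s => hentry_ne s i j h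
      rw [hfun,
        (((h1 (-(κ i))).mul_const (X₀ i * X₀ j)).const_mul ((Real.sqrt (κ i))⁻¹)).deriv, hXi i]
      ring
  -- diagonal identities
  have hDS : D * S = 1 := by
    rw [hD, hS, Matrix.diagonal_mul_diagonal]
    have : (fun i => (Real.sqrt (κ i))⁻¹ * Real.sqrt (κ i)) = fun _ => (1:ℝ) :=
      funext fun i => inv_mul_cancel₀ (hsqrt i)
    rw [this, Matrix.diagonal_one]
  have hDK : D * diagonal κ = S := by
    rw [hD, hS, Matrix.diagonal_mul_diagonal]
    refine congrArg diagonal (funext fun i => ?_)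
    have h := Real.mul_self_sqrt (le_of_lt (hκ i))
    field_simp
    rw [div_eq_iff (hsqrt i), h]
  have hSS : S * S = diagonal κ := by
    rw [hS, Matrix.diagonal_mul_diagonal]
    exact congrArg diagonal (funext fun i => Real.mul_self_sqrt (le_of_lt (hκ i)))
  have hEEm : E * Em = 1 := by
    rw [hE, hEm, Matrix.diagonal_mul_diagonal]
    have : (fun i => Real.exp (κ i * r) * Real.exp (-(κ i) * r)) = fun _ => (1:ℝ) :=
      funext fun i => by rw [mul_comm]; exact hexp (κ i)
    rw [this, Matrix.diagonal_one]
  -- explicit inverse of σ r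
  have hMinv : (1 + P) * (1 - (1 + t)⁻¹ • P) = 1 := by
    rw [hP, ht]; exact aux_inv X
  have hprod2 : (1 - P) * (1 - (1 + t)⁻¹ • P) = 1 - (2 / (1 + t)) • P := by
    rw [hP, ht]; exact aux_prod2 X
  set B := Em * ((1 - (1 + t)⁻¹ • P) * S) with hB
  have hσB : σ r * B = 1 := by
    rw [hσfac, hB]
    calc D * ((1 + P) * E) * (Em * ((1 - (1 + t)⁻¹ • P) * S))
        = D * ((1 + P) * ((E * Em) * ((1 - (1 + t)⁻¹ • P) * S))) := by
          simp only [Matrix.mul_assoc]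
      _ = D * (((1 + P) * (1 - (1 + t)⁻¹ • P)) * S) := by
          rw [hEEm, one_mul, Matrix.mul_assoc]
      _ = 1 := by rw [hMinv, one_mul, hDS]
  have hBσ : B * σ r = 1 := mul_eq_one_comm.mp hσB
  refine ⟨⟨⟨σ r, B, hσB, hBσ⟩, rfl⟩, Matrix.inv_eq_right_inv hMinv, ?_⟩
  have hinv : (σ r)⁻¹ = B := Matrix.inv_eq_right_inv hσB
  rw [hinv, hσdfac, hB]
  calc (D * diagonal κ) * ((1 - P) * E) * (Em * ((1 - (1 + t)⁻¹ • P) * S))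
      = (D * diagonal κ) * ((1 - P) * ((E * Em) * ((1 - (1 + t)⁻¹ • P) * S))) := by
        simp only [Matrix.mul_assoc]
    _ = S * (((1 - P) * (1 - (1 + t)⁻¹ • P)) * S) := by
        rw [hEEm, one_mul, hDK, Matrix.mul_assoc]
    _ = S * ((1 - (2 / (1 + t)) • P) * S) := by rw [hprod2]
    _ = diagonal κ - (2 / (1 + t)) • (S * P * S) := by
        rw [sub_mul, one_mul, smul_mul_assoc, mul_sub, mul_smul_comm, hSS,
          ← Matrix.mul_assoc]
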